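/- Let G be a finite group, g a central element of G, and u a torsion unit of the integral group ring ℤG with augmentation 1 such that u ≠ g. Then the coefficient-sum of u over the conjugacy class of g (which is just the coefficient of u at g, since g is central) is 0. -/

import Mathlib

open MonoidAlgebra

namespace BermanHigmanAux

open Finset Module Complex

/-- A complex number with absolute value 1 and real part 1 is 1. -/
lemma cx_eq_one {z : ℂ} (h1 : ‖z‖ = 1) (h2 : z.re = 1) : z = 1 := by
  have hsq : z.re ^ 2 + z.im ^ 2 = 1 := by
    have h := Complex.sq_norm z
    rw [h1] at h
    rw [Complex.normSq_apply] at h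
    nlinarith
  have him : z.im = 0 := by nlinarith
  exact Complex.ext h2 him

/-- Trace of an idempotent endomorphism of a f.d. complex vector space is a natural number,
and if that number is zero the endomorphism is zero. -/
lemma trace_idem {W : Type*} [AddCommGroup W] [Module ℂ W] [FiniteDimensional ℂ W]
    (f : Module.End ℂ W) (hf : f * f = f) :
    ∃ r : ℕ, LinearMap.trace ℂ W f = r ∧ (r = 0 → f = 0) := by
  obtain ⟨p, hp⟩ := (LinearMap.isProj_iff_isIdempotentElem f).mpr hf
  refine ⟨finrank ℂ p, hp.trace, fun hr => ?_⟩
  have hp0 : p = ⊥ := Submodule.finrank_eq_zero.mp hr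
  ext x
  have := hp.map_mem x
  rw [hp0, Submodule.mem_bot] at this
  simpa using this

section proj

variable {A : Type*} [Ring A] [Algebra ℂ A]

/-- Unnormalized spectral projection `∑ z⁻ᵏ tᵏ`. -/
noncomputable def projS (t : A) (m : ℕ) (z : ℂ) : A := ∑ k ∈ Finset.range m, z⁻¹ ^ k • t ^ k

lemma mul_projS (t : A) {m : ℕ} (hm : 0 < m) (ht : t ^ m = 1) {z : ℂ} (hz : z ^ m = 1)
    (hz0 : z ≠ 0) : t * projS t m z = z • projS t m z := by
  have ha0 : z⁻¹ ≠ 0 := inv_ne_zero hz0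
  have ham : z⁻¹ ^ m = 1 := by rw [inv_pow, hz, inv_one]
  obtain ⟨n, rfl⟩ : ∃ n, m = n + 1 := ⟨m - 1, (Nat.succ_pred_eq_of_pos hm).symm⟩
  have h2 : ∑ k ∈ range (n + 1), z⁻¹ ^ (k + 1) • t ^ (k + 1) = projS t (n + 1) z := by
    rw [Finset.sum_range_succ, projS, Finset.sum_range_succ']
    congr 1
    rw [ham, ht]
    simp
  have h3 : z⁻¹ • (t * projS t (n + 1) z) = z⁻¹ • (z • projS t (n + 1) z) := by
    have lhs : z⁻¹ • (t * projS t (n + 1) z)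
        = ∑ k ∈ range (n + 1), z⁻¹ ^ (k + 1) • t ^ (k + 1) := by
      rw [projS, Finset.mul_sum, Finset.smul_sum]
      refine Finset.sum_congr rfl fun k _ => ?_
      rw [mul_smul_comm, smul_smul, ← pow_succ', ← pow_succ']
    rw [lhs, h2, smul_smul, inv_mul_cancel₀ hz0, one_smul]
  exact smul_right_injective _ ha0 h3

lemma pow_mul_projS (t : A) {m : ℕ} (hm : 0 < m) (ht : t ^ m = 1) {z : ℂ} (hz : z ^ m = 1)
    (hz0 : z ≠ 0) (k : ℕ) : t ^ k * projS t m z = z ^ k • projS t m z := by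
  induction k with
  | zero => simp
  | succ k ih =>
    rw [pow_succ', mul_assoc, ih, mul_smul_comm, mul_projS t hm ht hz hz0, smul_smul, ← pow_succ]

lemma projS_sq (t : A) {m : ℕ} (hm : 0 < m) (ht : t ^ m = 1) {z : ℂ} (hz : z ^ m = 1)
    (hz0 : z ≠ 0) : projS t m z * projS t m z = (m : ℂ) • projS t m z := by
  nth_rewrite 1 [projS]
  rw [Finset.sum_mul]
  have : ∀ k ∈ range m, (z⁻¹ ^ k • t ^ k) * projS t m z = projS t m z := by
    intro k _
    rw [smul_mul_assoc, pow_mul_projS t hm ht hz hz0, smul_smul, ← mul_pow,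
      inv_mul_cancel₀ hz0, one_pow, one_smul]
  rw [Finset.sum_congr rfl this, Finset.sum_const, Finset.card_range, ← Nat.cast_smul_eq_nsmul ℂ]

lemma sum_projS (t : A) {m : ℕ} (hm : 0 < m) (ht : t ^ m = 1) {ω : ℂ}
    (hω : IsPrimitiveRoot ω m) :
    ∑ j ∈ Finset.range m, projS t m (ω ^ j) = (m : ℂ) • 1 := by
  have key : ∀ j k : ℕ, ((ω ^ j)⁻¹) ^ k = ((ω ^ k)⁻¹) ^ j := by
    intro j k
    rw [inv_pow, inv_pow, ← pow_mul, ← pow_mul, Nat.mul_comm]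
  simp only [projS]
  rw [Finset.sum_comm]
  have hinner : ∀ k ∈ range m,
      (∑ j ∈ range m, ((ω ^ j)⁻¹) ^ k • t ^ k) = (if k = 0 then (m : ℂ) else 0) • t ^ k := by
    intro k hk
    rw [← Finset.sum_smul]
    congr 1
    have : ∀ j ∈ range m, ((ω ^ j)⁻¹) ^ k = ((ω ^ k)⁻¹) ^ j := fun j _ => key j k
    rw [Finset.sum_congr rfl this]
    by_cases hk0 : k = 0
    · subst hk0; simp
    · have hz1 : (ω ^ k)⁻¹ ≠ 1 := by
        intro h
        exact hω.pow_ne_one_of_pos_of_lt hk0 (Finset.mem_range.mp hk)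
          (by rw [← inv_inv (ω ^ k), h, inv_one])
      have hzm : ((ω ^ k)⁻¹) ^ m = 1 := by
        rw [inv_pow, ← pow_mul, Nat.mul_comm, pow_mul, hω.pow_eq_one, one_pow, inv_one]
      rw [geom_sum_eq hz1, hzm, if_neg hk0]
      simp
  rw [Finset.sum_congr rfl hinner,
    Finset.sum_eq_single 0 (fun k _ hk0 => by rw [if_neg hk0, zero_smul])
      (fun h => absurd (Finset.mem_range.mpr hm) h)]
  simp

end proj

variable {G : Type*} [Group G] [Fintype G]

noncomputable def bG : Basis G ℂ (MonoidAlgebra ℂ G) := MonoidAlgebra.basis G ℂ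

instance : Module.Free ℂ (MonoidAlgebra ℂ G) := Module.Free.of_basis (bG (G := G))

instance : Module.Finite ℂ (MonoidAlgebra ℂ G) := Module.Finite.of_basis (bG (G := G))

lemma trace_mulLeft (w : MonoidAlgebra ℂ G) :
    LinearMap.trace ℂ (MonoidAlgebra ℂ G) (LinearMap.mulLeft ℂ w)
      = (Fintype.card G : ℂ) * w.coeff 1 := by
  classical
  rw [LinearMap.trace_eq_matrix_trace ℂ (bG (G := G)), Matrix.trace]
  have hdiag : ∀ i : G,
      (LinearMap.toMatrix (bG (G := G)) (bG (G := G)) (LinearMap.mulLeft ℂ w)).diag i = w.coeff 1 := by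
    intro i
    rw [Matrix.diag, LinearMap.toMatrix_apply, LinearMap.mulLeft_apply]
    have hb : (bG (G := G)) i = MonoidAlgebra.single i (1 : ℂ) :=
      MonoidAlgebra.basis_apply ℂ i
    have hrepr : ∀ v : MonoidAlgebra ℂ G, ((bG (G := G)).repr v) i = v.coeff i := fun v => rfl
    rw [hb, hrepr, MonoidAlgebra.coeff_mul_single_apply]
    simp
  rw [Finset.sum_congr rfl fun i _ => hdiag i]
  simp [mul_comm]

theorem key (u : MonoidAlgebra ℤ G) {m : ℕ} (hm : 0 < m) (hum : u ^ m = 1)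
    (haug : (u.coeff.sum fun _ c => c) = 1) (hne : u ≠ 1) : u.coeff 1 = 0 := by
  classical
  by_contra h1
  let ψ : MonoidAlgebra ℤ G →ₐ[ℤ] MonoidAlgebra ℂ G :=
    (MonoidAlgebra.lift ℤ (MonoidAlgebra ℂ G) G) (MonoidAlgebra.of ℂ G)
  have hψ : ∀ (w : MonoidAlgebra ℤ G) (x : G), (ψ w).coeff x = (w.coeff x : ℂ) := by
    intro w x
    rw [show ψ w = w.coeff.sum fun a b => b • (MonoidAlgebra.of ℂ G a) from
      MonoidAlgebra.lift_apply _ w]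
    rw [MonoidAlgebra.coeff_finsuppSum, Finsupp.sum_apply, Finsupp.sum]
    have hterm : ∀ a : G, ((w.coeff a • (MonoidAlgebra.of ℂ G a) : MonoidAlgebra ℂ G)).coeff x
        = if a = x then (w.coeff a : ℂ) else 0 := by
      intro a
      rw [MonoidAlgebra.of_apply,
        show (w.coeff a • (MonoidAlgebra.single a (1 : ℂ)) : MonoidAlgebra ℂ G)
          = MonoidAlgebra.single a ((w.coeff a : ℂ)) from by
            rw [MonoidAlgebra.smul_single]; norm_num]
      exact MonoidAlgebra.coeff_single_apply
    rw [Finset.sum_congr rfl fun a _ => hterm a, Finset.sum_ite_eq' w.coeff.support x]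
    by_cases hx : x ∈ w.coeff.support
    · simp [hx]
    · simp [hx, Finsupp.notMem_support_iff.mp hx]
  set N := Fintype.card G with hN
  set T : Module.End ℂ (MonoidAlgebra ℂ G) := LinearMap.mulLeft ℂ (ψ u) with hT
  have hTm : T ^ m = 1 := by
    rw [hT, LinearMap.pow_mulLeft, ← map_pow, hum, map_one, LinearMap.mulLeft_one]
    rfl
  set ω : ℂ := Complex.exp (2 * Real.pi * Complex.I / m) with hω
  have hωprim : IsPrimitiveRoot ω m := Complex.isPrimitiveRoot_exp m hm.ne'
  have hωm : ω ^ m = 1 := hωprim.pow_eq_one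
  have hωabs : ‖ω‖ = 1 := by
    rw [hω, Complex.norm_exp]
    norm_num [Complex.div_re]
  have hω0 : ω ≠ 0 := Complex.exp_ne_zero _
  have hzj : ∀ j : ℕ, (ω ^ j) ^ m = 1 := fun j => by
    rw [← pow_mul, Nat.mul_comm, pow_mul, hωm, one_pow]
  have hzj0 : ∀ j : ℕ, ω ^ j ≠ 0 := fun j => pow_ne_zero _ hω0
  have habsj : ∀ j : ℕ, ‖ω ^ j‖ = 1 := fun j => by
    rw [norm_pow, hωabs, one_pow]
  have hm0 : (m : ℂ) ≠ 0 := Nat.cast_ne_zero.mpr hm.ne'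
  set P : ℕ → Module.End ℂ (MonoidAlgebra ℂ G) :=
    fun j => (m : ℂ)⁻¹ • projS T m (ω ^ j) with hP
  have hP1 : ∑ j ∈ range m, P j = 1 := by
    simp only [hP]
    rw [← Finset.smul_sum, sum_projS T hm hTm hωprim, smul_smul, inv_mul_cancel₀ hm0, one_smul]
  have hTP : ∀ j, T * P j = (ω ^ j) • P j := by
    intro j
    simp only [hP]
    rw [mul_smul_comm, mul_projS T hm hTm (hzj j) (hzj0 j), smul_comm]
  have hPP : ∀ j, P j * P j = P j := by
    intro j
    simp only [hP]
    rw [smul_mul_assoc, mul_smul_comm, projS_sq T hm hTm (hzj j) (hzj0 j), smul_smul, smul_smul,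
      mul_comm ((m:ℂ)⁻¹), mul_assoc, inv_mul_cancel₀ hm0, mul_one]
  choose r hr hr0 using fun j => trace_idem (P j) (hPP j)
  set c : ℂ := ((u.coeff 1 : ℤ) : ℂ) with hc
  have htrT : LinearMap.trace ℂ (MonoidAlgebra ℂ G) T = (N : ℂ) * c := by
    rw [hT, trace_mulLeft, hψ u 1]
  have htr1 : LinearMap.trace ℂ (MonoidAlgebra ℂ G)
      (1 : Module.End ℂ (MonoidAlgebra ℂ G)) = (N : ℂ) := by
    have h := trace_mulLeft (1 : MonoidAlgebra ℂ G)
    rw [LinearMap.mulLeft_one] at h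
    rw [show (1 : Module.End ℂ (MonoidAlgebra ℂ G)) = LinearMap.id from rfl, h,
      MonoidAlgebra.one_def]
    simp [hN]
  have hrsum : ∑ j ∈ range m, (r j : ℂ) = (N : ℂ) := by
    have h := congrArg (LinearMap.trace ℂ (MonoidAlgebra ℂ G)) hP1
    rw [map_sum, htr1] at h
    rw [← h]
    exact Finset.sum_congr rfl fun j _ => (hr j).symm
  have hTsum : T = ∑ j ∈ range m, (ω ^ j) • P j := by
    conv_lhs => rw [← mul_one T, ← hP1]
    rw [Finset.mul_sum]
    exact Finset.sum_congr rfl fun j _ => hTP j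
  have htreq : ∑ j ∈ range m, (ω ^ j) * (r j : ℂ) = (N : ℂ) * c := by
    have h := congrArg (LinearMap.trace ℂ (MonoidAlgebra ℂ G)) hTsum
    rw [map_sum, htrT] at h
    rw [h]
    refine Finset.sum_congr rfl fun j _ => ?_
    rw [map_smul, hr j, smul_eq_mul]
  have hrre : ∑ j ∈ range m, (r j : ℝ) = (N : ℝ) := by
    have h := congrArg Complex.re hrsum
    rw [Complex.re_sum] at h
    simpa using h
  have habsc : 1 ≤ ‖c‖ := by
    rw [hc, Complex.norm_intCast]
    exact_mod_cast Int.one_le_abs (fun h => h1 h)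
  have hNpos : 0 < N := Fintype.card_pos
  have htri : (N : ℝ) * ‖c‖ ≤ (N : ℝ) := by
    have h := norm_sum_le (range m) (fun j => (ω ^ j) * (r j : ℂ))
    rw [htreq] at h
    have h2 : ∀ j ∈ range m, ‖(ω ^ j) * (r j : ℂ)‖ = (r j : ℝ) := by
      intro j _
      rw [norm_mul, habsj, one_mul, Complex.norm_natCast]
    rw [Finset.sum_congr rfl h2, hrre, norm_mul, Complex.norm_natCast] at h
    exact h
  have habsc1 : ‖c‖ = 1 := by
    have hNpos' : (0 : ℝ) < (N : ℝ) := by exact_mod_cast hNpos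
    nlinarith
  have hcc : (starRingEnd ℂ) c * c = 1 := by
    rw [mul_comm, Complex.mul_conj, Complex.normSq_eq_norm_sq, habsc1]
    norm_num
  have hterm0 : ∀ j ∈ range m, (r j : ℝ) * (1 - ((starRingEnd ℂ) c * ω ^ j).re) = 0 := by
    have hnonneg : ∀ j ∈ range m,
        0 ≤ (r j : ℝ) * (1 - ((starRingEnd ℂ) c * ω ^ j).re) := by
      intro j _
      apply mul_nonneg (Nat.cast_nonneg _)
      have h2 : ((starRingEnd ℂ) c * ω ^ j).re ≤ 1 := by
        calc ((starRingEnd ℂ) c * ω ^ j).re ≤ ‖(starRingEnd ℂ) c * ω ^ j‖ :=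
              Complex.re_le_norm _
          _ = 1 := by rw [norm_mul, Complex.norm_conj, habsc1, habsj, one_mul]
      linarith
    have hsum0 : ∑ j ∈ range m, (r j : ℝ) * (1 - ((starRingEnd ℂ) c * ω ^ j).re) = 0 := by
      have e1 : ((starRingEnd ℂ) c * ∑ j ∈ range m, (ω ^ j) * (r j : ℂ)).re
          = ∑ j ∈ range m, (r j : ℝ) * ((starRingEnd ℂ) c * ω ^ j).re := by
        rw [Finset.mul_sum, Complex.re_sum]
        refine Finset.sum_congr rfl fun j _ => ?_
        rw [show (starRingEnd ℂ) c * ((ω ^ j) * (r j : ℂ))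
            = ((starRingEnd ℂ) c * ω ^ j) * (r j : ℂ) from by ring]
        simp [Complex.mul_re]
        ring
      have e2 : ((starRingEnd ℂ) c * ((N : ℂ) * c)).re = (N : ℝ) := by
        rw [show (starRingEnd ℂ) c * ((N : ℂ) * c) = (N : ℂ) * ((starRingEnd ℂ) c * c) from by
          ring, hcc, mul_one]
        simp
      have e3 := congrArg Complex.re (congrArg (fun z => (starRingEnd ℂ) c * z) htreq)
      rw [e1, e2] at e3
      have : ∑ j ∈ range m, (r j : ℝ) * (1 - ((starRingEnd ℂ) c * ω ^ j).re)
          = ∑ j ∈ range m, (r j : ℝ) - ∑ j ∈ range m, (r j : ℝ) * ((starRingEnd ℂ) c * ω ^ j).re := by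
        rw [← Finset.sum_sub_distrib]
        exact Finset.sum_congr rfl fun j _ => by ring
      rw [this, e3, hrre, sub_self]
    intro j hj
    exact (Finset.sum_eq_zero_iff_of_nonneg hnonneg).mp hsum0 j hj
  have hjc : ∀ j ∈ range m, P j = 0 ∨ ω ^ j = c := by
    intro j hj
    rcases mul_eq_zero.mp (hterm0 j hj) with h | h
    · exact Or.inl (hr0 j (by exact_mod_cast h))
    · right
      have h2 : ((starRingEnd ℂ) c * ω ^ j).re = 1 := by linarith
      have habs : ‖(starRingEnd ℂ) c * ω ^ j‖ = 1 := by
        rw [norm_mul, Complex.norm_conj, habsc1, habsj, one_mul]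
      have h3 : (starRingEnd ℂ) c * ω ^ j = 1 := cx_eq_one habs h2
      calc ω ^ j = (c * (starRingEnd ℂ) c) * ω ^ j := by rw [mul_comm c, hcc, one_mul]
        _ = c * ((starRingEnd ℂ) c * ω ^ j) := by ring
        _ = c := by rw [h3, mul_one]
  have hTc : T = c • 1 := by
    rw [hTsum, show (c • (1 : Module.End ℂ (MonoidAlgebra ℂ G))) = ∑ j ∈ range m, c • P j from by
      rw [← Finset.smul_sum, hP1]]
    refine Finset.sum_congr rfl fun j hj => ?_
    rcases hjc j hj with h | h
    · rw [h, smul_zero, smul_zero]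
    · rw [h]
  have hu : ψ u = c • (1 : MonoidAlgebra ℂ G) := by
    have h := congrArg (fun f : Module.End ℂ (MonoidAlgebra ℂ G) => f 1) hTc
    simpa [hT, LinearMap.mulLeft_apply, mul_one] using h
  have hux : ∀ x : G, x ≠ 1 → u.coeff x = 0 := by
    intro x hx
    have h2 := hψ u x
    rw [hu] at h2
    have h3 : ((c • (1 : MonoidAlgebra ℂ G)) : MonoidAlgebra ℂ G).coeff x = 0 := by
      rw [MonoidAlgebra.coeff_smul_apply, MonoidAlgebra.one_def, MonoidAlgebra.coeff_single_apply,
        if_neg (fun h => hx h.symm), smul_zero]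
    rw [h3] at h2
    exact_mod_cast h2.symm
  have hu1 : u = MonoidAlgebra.single 1 (u.coeff 1) := by
    ext x
    by_cases hx : x = 1
    · subst hx; simp
    · rw [hux x hx, MonoidAlgebra.coeff_single_apply, if_neg (fun h => hx h.symm)]
  rw [hu1, MonoidAlgebra.coeff_single, Finsupp.sum_single_index rfl] at haug
  apply hne
  rw [hu1, haug]
  exact (MonoidAlgebra.one_def).symm

end BermanHigmanAux

/-- Berman–Higman: if `u` is a torsion unit of augmentation 1 in `ℤG`, `g` is central in
the finite group `G` and `u ≠ g`, then the coefficient of `u` at `g` is `0`. -/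
theorem stmt16 (G : Type*) [Group G] [Fintype G] (g : G)
    (hg : g ∈ Subgroup.center G)
    (u : MonoidAlgebra ℤ G)
    (htor : ∃ m : ℕ, 0 < m ∧ u ^ m = 1)
    (haug : (u.coeff.sum fun _ c => c) = 1)
    (hne : u ≠ MonoidAlgebra.of ℤ G g) :
    u.coeff g = 0 := by
  classical
  obtain ⟨m, hm, hum⟩ := htor
  set v : MonoidAlgebra ℤ G := u * MonoidAlgebra.single g⁻¹ 1 with hv
  have hcomm : Commute u (MonoidAlgebra.single g⁻¹ (1 : ℤ)) := by
    ext x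
    rw [MonoidAlgebra.coeff_mul_single_apply, MonoidAlgebra.coeff_single_mul_apply]
    rw [inv_inv, one_mul, mul_one]
    congr 1
    exact Subgroup.mem_center_iff.mp hg x
  have hsinglepow : ∀ k : ℕ, (MonoidAlgebra.single g⁻¹ (1 : ℤ) : MonoidAlgebra ℤ G) ^ k
      = MonoidAlgebra.single (g⁻¹ ^ k) 1 := by
    intro k
    induction k with
    | zero => simp [MonoidAlgebra.one_def]
    | succ k ih => rw [pow_succ, ih, MonoidAlgebra.single_mul_single, pow_succ, mul_one]
  set n := m * Fintype.card G with hn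
  have hn0 : 0 < n := Nat.mul_pos hm Fintype.card_pos
  have hvn : v ^ n = 1 := by
    have hg1 : g⁻¹ ^ (m * Fintype.card G) = 1 := by
      rw [Nat.mul_comm, pow_mul, pow_card_eq_one, one_pow]
    rw [hv, hn, hcomm.mul_pow, hsinglepow, hg1, pow_mul, hum, one_pow, one_mul]
    exact (MonoidAlgebra.one_def).symm
  have hvaug : (v.coeff.sum fun _ c => c) = 1 := by
    have haugHom := (MonoidAlgebra.lift ℤ ℤ G) (1 : G →* ℤ)
    have hεeq : ∀ w : MonoidAlgebra ℤ G,
        (MonoidAlgebra.lift ℤ ℤ G) (1 : G →* ℤ) w = w.coeff.sum fun _ c => c := by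
      intro w
      rw [MonoidAlgebra.lift_apply]
      exact Finset.sum_congr rfl fun a _ => by simp
    have h2 : (MonoidAlgebra.lift ℤ ℤ G) (1 : G →* ℤ) v = 1 := by
      rw [hv, map_mul, hεeq u, haug, one_mul]
      rw [show (MonoidAlgebra.single g⁻¹ (1:ℤ) : MonoidAlgebra ℤ G)
        = MonoidAlgebra.of ℤ G g⁻¹ from rfl]
      simp
    rw [← hεeq v, h2]
  have hvne : v ≠ 1 := by
    intro h
    apply hne
    have : u = v * MonoidAlgebra.single g 1 := by
      rw [hv, mul_assoc, MonoidAlgebra.single_mul_single, inv_mul_cancel, one_mul,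
        ← MonoidAlgebra.one_def, mul_one]
    rw [this, h, one_mul]
    rfl
  have hkey := BermanHigmanAux.key v hn0 hvn hvaug hvne
  rw [hv] at hkey
  rw [MonoidAlgebra.coeff_mul_single_apply] at hkey
  rw [inv_inv, one_mul, mul_one] at hkey
  exact hkey
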